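/- Let d ≥ 1, h > 0, and let θ₀, θ₁, θ₂ be real numbers. Then for every r ∈ ℝᵈ, (2π)^{−d} ∫_{ℝᵈ} e^{i⟨k, r⟩} exp(−‖k‖² h²/2) (θ₀ + θ₁‖k‖² + θ₂‖k‖⁴) dk = (exp(−‖r‖²/(2h²)) / (h√(2π))^{d}) · [ θ₀ − (θ₁/h²)(‖r‖²/h² − d) + (θ₂/h⁴)(‖r‖⁴/h⁴ − 2(d+2)‖r‖²/h² + d(d+2)) ]. -/

import Mathlib

open MeasureTheory

open MeasureTheory Real Filter Metric
open scoped Real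

noncomputable section

namespace SphLap2


lemma integrable_gauss (d : ℕ) {a : ℝ} (ha : 0 < a) :
    Integrable fun k : EuclideanSpace ℝ (Fin d) => Real.exp (-(a * ‖k‖ ^ 2)) := by
  have h := (GaussianFourier.integrable_cexp_neg_mul_sq_norm_add
      (V := EuclideanSpace ℝ (Fin d)) (b := (a : ℂ)) (by simpa using ha) 0
      (0 : EuclideanSpace ℝ (Fin d))).norm
  refine h.congr (Filter.Eventually.of_forall fun k => ?_)
  simp [Complex.norm_exp]
  left
  norm_cast

lemma pow_mul_exp_le (n : ℕ) {a : ℝ} (ha : 0 < a) (x : ℝ) (hx : 0 ≤ x) :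
    x ^ (2 * n) * Real.exp (-(2 * a * x ^ 2)) ≤
      (n.factorial / a ^ n) * Real.exp (-(a * x ^ 2)) := by
  have h1 : (x ^ 2) ^ n ≤ n.factorial / a ^ n * Real.exp (a * x ^ 2) := by
    have h := Real.pow_div_factorial_le_exp (x := a * x ^ 2) (by positivity) n
    rw [div_le_iff₀ (by positivity), mul_pow] at h
    calc (x ^ 2) ^ n = a ^ n * (x ^ 2) ^ n / a ^ n := by field_simp
    _ ≤ Real.exp (a * x ^ 2) * n.factorial / a ^ n := by gcongr
    _ = n.factorial / a ^ n * Real.exp (a * x ^ 2) := by ring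
  calc x ^ (2 * n) * Real.exp (-(2 * a * x ^ 2))
      = (x ^ 2) ^ n * Real.exp (-(2 * a * x ^ 2)) := by rw [pow_mul]
    _ ≤ (n.factorial / a ^ n * Real.exp (a * x ^ 2)) * Real.exp (-(2 * a * x ^ 2)) :=
        mul_le_mul_of_nonneg_right h1 (Real.exp_nonneg _)
    _ = n.factorial / a ^ n * Real.exp (-(a * x ^ 2)) := by
        rw [mul_assoc, ← Real.exp_add]; ring_nf

lemma integrable_pow_gauss (d n : ℕ) {t : ℝ} (ht : 0 < t) :
    Integrable fun k : EuclideanSpace ℝ (Fin d) =>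
      ‖k‖ ^ (2 * n) * Real.exp (-(t * ‖k‖ ^ 2)) := by
  have ha : 0 < t / 2 := half_pos ht
  refine Integrable.mono' ((integrable_gauss d ha).const_mul
      (n.factorial / (t / 2) ^ n)) ?_ (Filter.Eventually.of_forall fun k => ?_)
  · apply Continuous.aestronglyMeasurable; fun_prop
  · rw [Real.norm_eq_abs, abs_of_nonneg (by positivity)]
    have hb := pow_mul_exp_le n ha ‖k‖ (norm_nonneg k)
    rw [show 2 * (t / 2) * ‖k‖ ^ 2 = t * ‖k‖ ^ 2 by ring] at hb
    exact hb


def Fn (d n : ℕ) (r : EuclideanSpace ℝ (Fin d)) (t : ℝ) (k : EuclideanSpace ℝ (Fin d)) : ℂ :=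
  (‖k‖ : ℂ) ^ (2 * n) *
    Complex.exp (Complex.I * ((inner ℝ k r : ℝ) : ℂ) - (t : ℝ) * (‖k‖ : ℂ) ^ 2)

lemma norm_Fn (d n : ℕ) (r : EuclideanSpace ℝ (Fin d)) (t : ℝ)
    (k : EuclideanSpace ℝ (Fin d)) :
    ‖Fn d n r t k‖ = ‖k‖ ^ (2 * n) * Real.exp (-(t * ‖k‖ ^ 2)) := by
  rw [Fn, norm_mul, Complex.norm_exp]
  congr 1
  · rw [← Complex.ofReal_pow, Complex.norm_real, Real.norm_eq_abs, abs_of_nonneg (by positivity)]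
  · congr 1
    simp [Complex.sub_re, Complex.mul_re]
    left; norm_cast

lemma continuous_Fn (d n : ℕ) (r : EuclideanSpace ℝ (Fin d)) (t : ℝ) :
    Continuous (Fn d n r t) := by
  unfold Fn
  refine Continuous.mul (by fun_prop) (Complex.continuous_exp.comp ?_)
  refine Continuous.sub (Continuous.mul continuous_const ?_) (by fun_prop)
  exact Complex.continuous_ofReal.comp (continuous_id.inner continuous_const)

lemma Fn_succ (d n : ℕ) (r : EuclideanSpace ℝ (Fin d)) (t : ℝ)
    (k : EuclideanSpace ℝ (Fin d)) :
    Fn d (n + 1) r t k = (‖k‖ : ℂ) ^ 2 * Fn d n r t k := by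
  rw [Fn, Fn, show 2 * (n + 1) = 2 + 2 * n by ring, pow_add]
  ring

lemma integrable_Fn (d n : ℕ) (r : EuclideanSpace ℝ (Fin d)) {t : ℝ} (ht : 0 < t) :
    Integrable (Fn d n r t) := by
  refine Integrable.mono' (integrable_pow_gauss d n ht)
    (continuous_Fn d n r t).aestronglyMeasurable
    (Filter.Eventually.of_forall fun k => le_of_eq (norm_Fn d n r t k))

lemma hasDerivAt_Fn (d n : ℕ) (r : EuclideanSpace ℝ (Fin d))
    (k : EuclideanSpace ℝ (Fin d)) (t : ℝ) :
    HasDerivAt (fun t => Fn d n r t k) (-Fn d (n + 1) r t k) t := by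
  have h1 : HasDerivAt (fun t : ℝ => Complex.I * ((inner ℝ k r : ℝ) : ℂ) -
      (t : ℝ) * (‖k‖ : ℂ) ^ 2) (-(‖k‖ : ℂ) ^ 2) t := by
    have h0 : HasDerivAt (fun t : ℝ => ((t : ℂ) * (‖k‖ : ℂ) ^ 2))
        ((‖k‖ : ℂ) ^ 2) t := by
      simpa using (Complex.ofRealCLM.hasDerivAt (x := t)).mul_const ((‖k‖ : ℂ) ^ 2)
    simpa using (h0.const_sub (Complex.I * ((inner ℝ k r : ℝ) : ℂ)))
  have h2 := h1.cexp
  have h3 := h2.const_mul ((‖k‖ : ℂ) ^ (2 * n))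
  rw [Fn_succ]
  refine h3.congr_deriv ?_
  rw [Fn]
  ring

/-- closed form -/
def g (p c t : ℝ) : ℝ := (π / t) ^ p * Real.exp (-(c / t))

def u (p c t : ℝ) : ℝ := c / t ^ 2 - p / t

lemma J0_eq (d : ℕ) (r : EuclideanSpace ℝ (Fin d)) {t : ℝ} (ht : 0 < t) :
    ∫ k, Fn d 0 r t k = ((g ((d : ℝ) / 2) (‖r‖ ^ 2 / 4) t : ℝ) : ℂ) := by
  have key := GaussianFourier.integral_cexp_neg_mul_sq_norm_add
    (V := EuclideanSpace ℝ (Fin d)) (b := (t : ℂ)) (by simpa using ht) Complex.I r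
  have hl : ∫ k, Fn d 0 r t k =
      ∫ v : EuclideanSpace ℝ (Fin d),
        Complex.exp (-(t : ℂ) * ‖v‖ ^ 2 + Complex.I * ((inner ℝ r v : ℝ) : ℂ)) := by
    congr 1 with k
    rw [Fn, pow_zero, one_mul, real_inner_comm]
    congr 1
    ring
  rw [hl, key, finrank_euclideanSpace_fin]
  have h1 : ((π : ℂ) / (t : ℂ)) ^ ((d : ℂ) / 2) = (((π / t) ^ ((d : ℝ) / 2) : ℝ) : ℂ) := by
    rw [Complex.ofReal_cpow (by positivity)]
    push_cast
    ring_nf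
  have h2 : Complex.exp (Complex.I ^ 2 * (‖r‖ : ℂ) ^ 2 / (4 * (t : ℂ))) =
      ((Real.exp (-(‖r‖ ^ 2 / 4 / t)) : ℝ) : ℂ) := by
    rw [Complex.I_sq, Complex.ofReal_exp]
    congr 1
    push_cast
    ring
  rw [h1, h2, g]
  push_cast
  ring

lemma hasDerivAt_g (p c : ℝ) {t : ℝ} (ht : 0 < t) :
    HasDerivAt (g p c) (g p c t * u p c t) t := by
  have hπt : 0 < π / t := div_pos Real.pi_pos ht
  have h1 : HasDerivAt (fun t : ℝ => π / t) (-(π / t ^ 2)) t := by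
    have := (hasDerivAt_inv ht.ne').const_mul π
    refine this.congr_deriv ?_
    field_simp
  have h2 : HasDerivAt (fun t : ℝ => (π / t) ^ p)
      ((p * (π / t) ^ (p - 1)) * -(π / t ^ 2)) t :=
    (Real.hasDerivAt_rpow_const (p := p) (Or.inl hπt.ne')).comp t h1
  have h3 : HasDerivAt (fun t : ℝ => Real.exp (-(c / t)))
      (Real.exp (-(c / t)) * (c / t ^ 2)) t := by
    have hi : HasDerivAt (fun t : ℝ => -(c / t)) (c / t ^ 2) t := by
      have := ((hasDerivAt_inv ht.ne').const_mul c).neg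
      refine this.congr_deriv ?_
      field_simp
    exact hi.exp
  have := h2.mul h3
  refine this.congr_deriv ?_
  rw [Real.rpow_sub_one hπt.ne']
  unfold g u
  field_simp
  ring

lemma hasDerivAt_u (p c : ℝ) {t : ℝ} (ht : 0 < t) :
    HasDerivAt (u p c) (p / t ^ 2 - 2 * c / t ^ 3) t := by
  have h1 : HasDerivAt (fun t : ℝ => c / t ^ 2) (-(2 * c / t ^ 3)) t := by
    have h0 : HasDerivAt (fun t : ℝ => (t ^ 2)⁻¹) (-(2 * t) / (t ^ 2) ^ 2) t := by
      have := (hasDerivAt_pow 2 t).inv (pow_ne_zero 2 ht.ne')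
      refine this.congr_deriv ?_
      push_cast; ring
    have := h0.const_mul c
    refine this.congr_deriv ?_
    field_simp
  have h2 : HasDerivAt (fun t : ℝ => p / t) (-(p / t ^ 2)) t := by
    have := (hasDerivAt_inv ht.ne').const_mul p
    refine this.congr_deriv ?_
    field_simp
  have := h1.sub h2
  refine this.congr_deriv ?_
  ring

lemma hasDerivAt_g1 (p c : ℝ) {t : ℝ} (ht : 0 < t) :
    HasDerivAt (fun t => g p c t * u p c t)
      (g p c t * ((u p c t) ^ 2 + (p / t ^ 2 - 2 * c / t ^ 3))) t := by
  have := (hasDerivAt_g p c ht).mul (hasDerivAt_u p c ht)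
  refine this.congr_deriv ?_
  ring


lemma key_deriv (d n : ℕ) (r : EuclideanSpace ℝ (Fin d)) {t₀ : ℝ} (ht : 0 < t₀) :
    HasDerivAt (fun t => ∫ k, Fn d n r t k) (-∫ k, Fn d (n + 1) r t₀ k) t₀ := by
  have hb : Integrable fun k : EuclideanSpace ℝ (Fin d) =>
      ‖k‖ ^ (2 * (n + 1)) * Real.exp (-(t₀ / 2 * ‖k‖ ^ 2)) :=
    integrable_pow_gauss d (n + 1) (half_pos ht)
  have key := hasDerivAt_integral_of_dominated_loc_of_deriv_le
    (F := fun t k => Fn d n r t k)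
    (F' := fun t k => -Fn d (n + 1) r t k)
    (bound := fun k => ‖k‖ ^ (2 * (n + 1)) * Real.exp (-(t₀ / 2 * ‖k‖ ^ 2)))
    (Metric.ball_mem_nhds t₀ (half_pos ht))
    (Filter.Eventually.of_forall fun t => (continuous_Fn d n r t).aestronglyMeasurable)
    (integrable_Fn d n r ht)
    ((continuous_Fn d (n + 1) r t₀).neg.aestronglyMeasurable)
    (Filter.Eventually.of_forall fun k => fun t htb => ?_)
    hb
    (Filter.Eventually.of_forall fun k => fun t _ => hasDerivAt_Fn d n r k t)
  · have := key.2
    rwa [integral_neg] at this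
  · rw [norm_neg, norm_Fn]
    have htt : t₀ / 2 ≤ t := by
      rw [mem_ball, Real.dist_eq, abs_lt] at htb
      linarith
    have hmul : t₀ / 2 * ‖k‖ ^ 2 ≤ t * ‖k‖ ^ 2 :=
      mul_le_mul_of_nonneg_right htt (by positivity)
    exact mul_le_mul_of_nonneg_left (Real.exp_le_exp.mpr (by linarith)) (by positivity)

lemma J1_eq (d : ℕ) (r : EuclideanSpace ℝ (Fin d)) {t : ℝ} (ht : 0 < t) :
    ∫ k, Fn d 1 r t k =
      -(((g ((d : ℝ) / 2) (‖r‖ ^ 2 / 4) t * u ((d : ℝ) / 2) (‖r‖ ^ 2 / 4) t : ℝ)) : ℂ) := by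
  set p : ℝ := (d : ℝ) / 2
  set c : ℝ := ‖r‖ ^ 2 / 4
  have hJ := key_deriv d 0 r ht
  have heq : (fun s => ∫ k, Fn d 0 r s k) =ᶠ[nhds t] fun s => ((g p c s : ℝ) : ℂ) := by
    filter_upwards [Ioi_mem_nhds ht] with s hs
    exact J0_eq d r hs
  have h2 : HasDerivAt (fun s => ((g p c s : ℝ) : ℂ)) (-∫ k, Fn d 1 r t k) t :=
    hJ.congr_of_eventuallyEq heq.symm
  have hg : HasDerivAt (fun s => ((g p c s : ℝ) : ℂ))
      (((g p c t * u p c t : ℝ)) : ℂ) t := (hasDerivAt_g p c ht).ofReal_comp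
  have huni := h2.unique hg
  rw [← huni, neg_neg]

lemma J2_eq (d : ℕ) (r : EuclideanSpace ℝ (Fin d)) {t : ℝ} (ht : 0 < t) :
    ∫ k, Fn d 2 r t k =
      (((g ((d : ℝ) / 2) (‖r‖ ^ 2 / 4) t *
        ((u ((d : ℝ) / 2) (‖r‖ ^ 2 / 4) t) ^ 2 +
          ((d : ℝ) / 2 / t ^ 2 - 2 * (‖r‖ ^ 2 / 4) / t ^ 3)) : ℝ)) : ℂ) := by
  set p : ℝ := (d : ℝ) / 2
  set c : ℝ := ‖r‖ ^ 2 / 4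
  have hJ := key_deriv d 1 r ht
  have heq : (fun s => ∫ k, Fn d 1 r s k) =ᶠ[nhds t]
      fun s => -(((g p c s * u p c s : ℝ)) : ℂ) := by
    filter_upwards [Ioi_mem_nhds ht] with s hs
    exact J1_eq d r hs
  have h2 : HasDerivAt (fun s => -(((g p c s * u p c s : ℝ)) : ℂ))
      (-∫ k, Fn d 2 r t k) t := hJ.congr_of_eventuallyEq heq.symm
  have hg : HasDerivAt (fun s => -(((g p c s * u p c s : ℝ)) : ℂ))
      (-(((g p c t * ((u p c t) ^ 2 + (p / t ^ 2 - 2 * c / t ^ 3)) : ℝ)) : ℂ)) t :=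
    ((hasDerivAt_g1 p c ht).ofReal_comp).neg
  have huni := h2.unique hg
  exact neg_injective huni

lemma g_eval (d : ℕ) {h : ℝ} (hh : 0 < h) (x : ℝ) :
    g ((d : ℝ) / 2) (x / 4) (h ^ 2 / 2) =
      (Real.sqrt (2 * π) / h) ^ d * Real.exp (-x / (2 * h ^ 2)) := by
  have hs : Real.sqrt (2 * π) ^ 2 = 2 * π := Real.sq_sqrt (by positivity)
  unfold g
  congr 1
  · have hbase : π / (h ^ 2 / 2) = (Real.sqrt (2 * π) / h) ^ 2 := by
      rw [div_pow, hs]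
      field_simp
    rw [hbase, ← Real.rpow_natCast (Real.sqrt (2 * π) / h) 2,
      ← Real.rpow_mul (by positivity)]
    rw [show ((2 : ℕ) : ℝ) * ((d : ℝ) / 2) = (d : ℝ) by push_cast; ring,
      Real.rpow_natCast]
  · congr 1
    field_simp
    ring

lemma final_algebra (d : ℕ) {h : ℝ} (hh : 0 < h) (x θ₀ θ₁ θ₂ : ℝ) :
    ((2 * π) ^ d)⁻¹ * (θ₀ * g ((d : ℝ) / 2) (x / 4) (h ^ 2 / 2)
        + θ₁ * -(g ((d : ℝ) / 2) (x / 4) (h ^ 2 / 2) * u ((d : ℝ) / 2) (x / 4) (h ^ 2 / 2))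
        + θ₂ * (g ((d : ℝ) / 2) (x / 4) (h ^ 2 / 2) *
            ((u ((d : ℝ) / 2) (x / 4) (h ^ 2 / 2)) ^ 2 +
              ((d : ℝ) / 2 / (h ^ 2 / 2) ^ 2 - 2 * (x / 4) / (h ^ 2 / 2) ^ 3))))
      = (Real.exp (-x / (2 * h ^ 2)) / (h * Real.sqrt (2 * π)) ^ d) *
        (θ₀ - (θ₁ / h ^ 2) * (x / h ^ 2 - d)
          + (θ₂ / h ^ 4) * (x ^ 2 / h ^ 4 - 2 * ((d : ℝ) + 2) * x / h ^ 2
              + d * ((d : ℝ) + 2))) := by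
  have hs : Real.sqrt (2 * π) ^ 2 = 2 * π := Real.sq_sqrt (by positivity)
  have hs0 : (0 : ℝ) < Real.sqrt (2 * π) := Real.sqrt_pos.mpr (by positivity)
  rw [g_eval d hh x]
  unfold u
  set s : ℝ := Real.sqrt (2 * π) with hsdef
  rw [show 2 * π = s ^ 2 from hs.symm]
  have hB : θ₀ - θ₁ * ((x / 4) / (h ^ 2 / 2) ^ 2 - ((d : ℝ) / 2) / (h ^ 2 / 2))
      + θ₂ * (((x / 4) / (h ^ 2 / 2) ^ 2 - ((d : ℝ) / 2) / (h ^ 2 / 2)) ^ 2 +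
          ((d : ℝ) / 2 / (h ^ 2 / 2) ^ 2 - 2 * (x / 4) / (h ^ 2 / 2) ^ 3))
      = (θ₀ - (θ₁ / h ^ 2) * (x / h ^ 2 - d)
          + (θ₂ / h ^ 4) * (x ^ 2 / h ^ 4 - 2 * ((d : ℝ) + 2) * x / h ^ 2
              + d * ((d : ℝ) + 2))) := by
    field_simp
    ring
  have hA : ((s ^ 2) ^ d)⁻¹ * ((s / h) ^ d * Real.exp (-x / (2 * h ^ 2)))
      = Real.exp (-x / (2 * h ^ 2)) / (h * s) ^ d := by
    rw [div_pow, mul_pow, ← pow_mul]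
    field_simp
    ring
  calc ((s ^ 2) ^ d)⁻¹ * (θ₀ * ((s / h) ^ d * Real.exp (-x / (2 * h ^ 2)))
        + θ₁ * -(((s / h) ^ d * Real.exp (-x / (2 * h ^ 2))) *
            ((x / 4) / (h ^ 2 / 2) ^ 2 - ((d : ℝ) / 2) / (h ^ 2 / 2)))
        + θ₂ * (((s / h) ^ d * Real.exp (-x / (2 * h ^ 2))) *
            (((x / 4) / (h ^ 2 / 2) ^ 2 - ((d : ℝ) / 2) / (h ^ 2 / 2)) ^ 2 +
              ((d : ℝ) / 2 / (h ^ 2 / 2) ^ 2 - 2 * (x / 4) / (h ^ 2 / 2) ^ 3))))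
      = (((s ^ 2) ^ d)⁻¹ * ((s / h) ^ d * Real.exp (-x / (2 * h ^ 2)))) *
        (θ₀ - θ₁ * ((x / 4) / (h ^ 2 / 2) ^ 2 - ((d : ℝ) / 2) / (h ^ 2 / 2))
          + θ₂ * (((x / 4) / (h ^ 2 / 2) ^ 2 - ((d : ℝ) / 2) / (h ^ 2 / 2)) ^ 2 +
              ((d : ℝ) / 2 / (h ^ 2 / 2) ^ 2 - 2 * (x / 4) / (h ^ 2 / 2) ^ 3))) := by
        ring
    _ = _ := by rw [hA, hB]

end SphLap2


open SphLap2

/-- Explicit form of the SPH-LAP2 precision function with the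
Gaussian smoothing kernel: for every `r ∈ ℝᵈ`,
`(2π)^{−d} ∫ e^{i⟨k,r⟩} exp(−‖k‖²h²/2)(θ₀ + θ₁‖k‖² + θ₂‖k‖⁴) dk`
equals
`(exp(−‖r‖²/(2h²))/(h√(2π))^d)[θ₀ − (θ₁/h²)(‖r‖²/h² − d)
  + (θ₂/h⁴)(‖r‖⁴/h⁴ − 2(d+2)‖r‖²/h² + d(d+2))]`. -/
theorem sph_lap2_gaussian_precision_function (d : ℕ) (hd : 1 ≤ d) (h : ℝ) (hh : 0 < h)
    (θ₀ θ₁ θ₂ : ℝ) (r : EuclideanSpace ℝ (Fin d)) :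
    (((2 * Real.pi) ^ d : ℝ) : ℂ)⁻¹ *
        ∫ k : EuclideanSpace ℝ (Fin d),
          Complex.exp (Complex.I * ((inner ℝ k r : ℝ) : ℂ)) *
            ((Real.exp (-(‖k‖ ^ 2 * h ^ 2 / 2)) * (θ₀ + θ₁ * ‖k‖ ^ 2 + θ₂ * ‖k‖ ^ 4) : ℝ) : ℂ)
      = (((Real.exp (-‖r‖ ^ 2 / (2 * h ^ 2)) / (h * Real.sqrt (2 * Real.pi)) ^ d) *
            (θ₀ - (θ₁ / h ^ 2) * (‖r‖ ^ 2 / h ^ 2 - d)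
              + (θ₂ / h ^ 4) * (‖r‖ ^ 4 / h ^ 4 - 2 * ((d : ℝ) + 2) * ‖r‖ ^ 2 / h ^ 2
                  + d * ((d : ℝ) + 2)) : ℝ)) : ℂ) := by
  have ht₀ : (0 : ℝ) < h ^ 2 / 2 := by positivity
  have hpt : ∀ k : EuclideanSpace ℝ (Fin d),
      Complex.exp (Complex.I * ((inner ℝ k r : ℝ) : ℂ)) *
          ((Real.exp (-(‖k‖ ^ 2 * h ^ 2 / 2)) * (θ₀ + θ₁ * ‖k‖ ^ 2 + θ₂ * ‖k‖ ^ 4) : ℝ) : ℂ)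
        = (θ₀ : ℂ) * Fn d 0 r (h ^ 2 / 2) k + (θ₁ : ℂ) * Fn d 1 r (h ^ 2 / 2) k
          + (θ₂ : ℂ) * Fn d 2 r (h ^ 2 / 2) k := by
    intro k
    simp only [Fn]
    rw [show Complex.I * ((inner ℝ k r : ℝ) : ℂ) - ((h ^ 2 / 2 : ℝ) : ℂ) * (‖k‖ : ℂ) ^ 2
        = Complex.I * ((inner ℝ k r : ℝ) : ℂ) + ((-(‖k‖ ^ 2 * h ^ 2 / 2) : ℝ) : ℂ) by
          push_cast; ring]
    rw [Complex.exp_add, ← Complex.ofReal_exp]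
    push_cast
    ring
  simp only [hpt]
  have i0 := (integrable_Fn d 0 r ht₀).const_mul (θ₀ : ℂ)
  have i1 := (integrable_Fn d 1 r ht₀).const_mul (θ₁ : ℂ)
  have i2 := (integrable_Fn d 2 r ht₀).const_mul (θ₂ : ℂ)
  have i01 : Integrable (fun k : EuclideanSpace ℝ (Fin d) =>
      (θ₀ : ℂ) * Fn d 0 r (h ^ 2 / 2) k + (θ₁ : ℂ) * Fn d 1 r (h ^ 2 / 2) k) := i0.add i1
  rw [MeasureTheory.integral_add i01 i2, MeasureTheory.integral_add i0 i1,
    MeasureTheory.integral_const_mul, MeasureTheory.integral_const_mul,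
    MeasureTheory.integral_const_mul,
    J0_eq d r ht₀, J1_eq d r ht₀, J2_eq d r ht₀]
  have FA := final_algebra d hh (‖r‖ ^ 2) θ₀ θ₁ θ₂
  rw [show ‖r‖ ^ 2 / 4 = ‖r‖ ^ 2 / 4 from rfl]
  push_cast [← Complex.ofReal_inv, ← Complex.ofReal_mul, ← Complex.ofReal_neg,
    ← Complex.ofReal_add, ← Complex.ofReal_pow]
  norm_cast
  rw [show ‖r‖ ^ 4 = (‖r‖ ^ 2) ^ 2 by ring]
  push_cast
  linear_combination FA
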